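/- Let H : ℝ^N → ℝ be C² on ℝ^N \ {0}, positively 1-homogeneous, positive off 0, and suppose the Hessian of H² satisfies Hess(H²)(ξ)ζ·ζ ≥ Ξ|ζ|² for some Ξ > 0 and all ξ ≠ 0. Then for all ξ, η ∈ ℝ^N, (H(ξ)∇H(ξ) − H(η)∇H(η)) · (ξ − η) ≥ (Ξ/2)|ξ − η|², where H(0)∇H(0) is interpreted as 0. In particular the map ξ ↦ H(ξ)∇H(ξ) is strictly monotone. -/

import Mathlib

open MeasureTheory Set
open scoped RealInnerProductSpace Classical

/-- Chain-rule lemma: the derivative of `t ↦ D(H²)(η + t v) v` is the second derivative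
`Hess(H²)(η + t v)(v, v)`, valid at any point where `η + t v ≠ 0`. -/
theorem aux_hasDerivAt {N : ℕ} {G : EuclideanSpace ℝ (Fin N) → ℝ}
    (hG : ContDiffOn ℝ 2 G {(0 : EuclideanSpace ℝ (Fin N))}ᶜ)
    (η v : EuclideanSpace ℝ (Fin N)) (t : ℝ) (ht : η + t • v ≠ 0) :
    HasDerivAt (fun s : ℝ => fderiv ℝ G (η + s • v) v)
      (iteratedFDeriv ℝ 2 G (η + t • v) ![v, v]) t := by
  have hmem : {(0 : EuclideanSpace ℝ (Fin N))}ᶜ ∈ nhds (η + t • v) :=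
    isOpen_compl_singleton.mem_nhds ht
  have hcd : ContDiffAt ℝ 2 G (η + t • v) := hG.contDiffAt hmem
  have hf1 : ContDiffAt ℝ 1 (fderiv ℝ G) (η + t • v) := hcd.fderiv_right (by norm_num)
  have hd : HasFDerivAt (fderiv ℝ G) (fderiv ℝ (fderiv ℝ G) (η + t • v)) (η + t • v) :=
    (hf1.differentiableAt one_ne_zero).hasFDerivAt
  have hγ : HasDerivAt (fun s : ℝ => η + s • v) v t := by
    simpa using ((hasDerivAt_id t).smul_const v).const_add η
  have h1 : HasDerivAt (fun s : ℝ => fderiv ℝ G (η + s • v))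
      (fderiv ℝ (fderiv ℝ G) (η + t • v) v) t := hd.comp_hasDerivAt t hγ
  have h2 := h1.clm_apply (hasDerivAt_const t v)
  rw [iteratedFDeriv_two_apply]
  simpa using h2

/-- `D(H²)(ξ) v = 2 ⟪H(ξ) ∇H(ξ), v⟫` for `ξ ≠ 0`. -/
theorem aux_fderiv_eq {N : ℕ} {H : EuclideanSpace ℝ (Fin N) → ℝ}
    (hreg : ContDiffOn ℝ 2 H {(0 : EuclideanSpace ℝ (Fin N))}ᶜ)
    {ξ : EuclideanSpace ℝ (Fin N)} (hξ : ξ ≠ 0) (v : EuclideanSpace ℝ (Fin N)) :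
    fderiv ℝ (fun x => (H x) ^ 2) ξ v = 2 * ⟪H ξ • gradient H ξ, v⟫ := by
  have hcd : ContDiffAt ℝ 2 H ξ := hreg.contDiffAt (isOpen_compl_singleton.mem_nhds hξ)
  have hdiff : DifferentiableAt ℝ H ξ := hcd.differentiableAt (by norm_num)
  have hgrad : HasFDerivAt H
      (InnerProductSpace.toDual ℝ (EuclideanSpace ℝ (Fin N)) (gradient H ξ)) ξ :=
    hdiff.hasGradientAt.hasFDerivAt
  have hmul := hgrad.mul hgrad
  have heq : (fun x => (H x) ^ 2) = fun x => H x * H x := by funext x; ring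
  rw [heq, show (fun x => H x * H x) = H * H from rfl, hmul.fderiv]
  simp only [ContinuousLinearMap.add_apply, ContinuousLinearMap.coe_smul',
    Pi.smul_apply, InnerProductSpace.toDual_apply_apply, smul_eq_mul, real_inner_smul_left]
  ring

/-- Key pointwise estimate: `⟪H(ξ)∇H(ξ), ξ⟫ ≥ (Ξ/2)‖ξ‖²` for `ξ ≠ 0`. -/
theorem aux_point {N : ℕ} {H : EuclideanSpace ℝ (Fin N) → ℝ} {Ξ : ℝ}
    (hreg : ContDiffOn ℝ 2 H {(0 : EuclideanSpace ℝ (Fin N))}ᶜ)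
    (hhom : ∀ t : ℝ, 0 ≤ t → ∀ ξ : EuclideanSpace ℝ (Fin N), H (t • ξ) = t * H ξ)
    (hhess : ∀ ξ : EuclideanSpace ℝ (Fin N), ξ ≠ 0 →
      ∀ ζ : EuclideanSpace ℝ (Fin N),
        Ξ * ‖ζ‖ ^ 2 ≤ iteratedFDeriv ℝ 2 (fun x => (H x) ^ 2) ξ ![ζ, ζ])
    {ξ : EuclideanSpace ℝ (Fin N)} (hξ : ξ ≠ 0) :
    (Ξ / 2) * ‖ξ‖ ^ 2 ≤ ⟪H ξ • gradient H ξ, ξ⟫ := by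
  have hG : ContDiffOn ℝ 2 (fun x => (H x) ^ 2)
      {(0 : EuclideanSpace ℝ (Fin N))}ᶜ := hreg.pow 2
  -- homogeneity of the derivative of H² along the ray through ξ
  have hhomG : ∀ t : ℝ, 0 < t →
      fderiv ℝ (fun x => (H x) ^ 2) (t • ξ) ξ = t * fderiv ℝ (fun x => (H x) ^ 2) ξ ξ := by
    intro t ht
    have htξ : t • ξ ≠ 0 := smul_ne_zero (ne_of_gt ht) hξ
    have hd1 : HasFDerivAt (fun x => (H x) ^ 2)
        (fderiv ℝ (fun x => (H x) ^ 2) (t • ξ)) (t • ξ) :=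
      ((hG.contDiffAt (isOpen_compl_singleton.mem_nhds htξ)).differentiableAt
        (by norm_num)).hasFDerivAt
    have hd2 : HasFDerivAt (fun x => (H x) ^ 2)
        (fderiv ℝ (fun x => (H x) ^ 2) ξ) ξ :=
      ((hG.contDiffAt (isOpen_compl_singleton.mem_nhds hξ)).differentiableAt
        (by norm_num)).hasFDerivAt
    have hsm : HasFDerivAt (fun y : EuclideanSpace ℝ (Fin N) => t • y)
        (t • ContinuousLinearMap.id ℝ (EuclideanSpace ℝ (Fin N))) ξ :=
      (hasFDerivAt_id ξ).const_smul t
    have hcomp : HasFDerivAt (fun y => (H (t • y)) ^ 2)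
        ((fderiv ℝ (fun x => (H x) ^ 2) (t • ξ)).comp
          (t • ContinuousLinearMap.id ℝ (EuclideanSpace ℝ (Fin N)))) ξ := hd1.comp ξ hsm
    have hconst : HasFDerivAt (fun y => t ^ 2 * (H y) ^ 2)
        ((t ^ 2) • fderiv ℝ (fun x => (H x) ^ 2) ξ) ξ := hd2.const_mul (t ^ 2)
    have hfun : (fun y => (H (t • y)) ^ 2) = fun y => t ^ 2 * (H y) ^ 2 := by
      funext y; rw [hhom t ht.le]; ring
    rw [hfun] at hcomp
    have huniq := hcomp.unique hconst
    have happ := congrArg (fun L : EuclideanSpace ℝ (Fin N) →L[ℝ] ℝ => L ξ) huniq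
    simp only [ContinuousLinearMap.coe_comp', Function.comp_apply,
      ContinuousLinearMap.coe_smul', Pi.smul_apply, ContinuousLinearMap.coe_id', id_eq,
      _root_.map_smul, smul_eq_mul] at happ
    -- happ : t * fderiv G (t•ξ) ξ = t^2 * fderiv G ξ ξ
    refine mul_left_cancel₀ (ne_of_gt ht) ?_
    linear_combination happ
  set C := fderiv ℝ (fun x => (H x) ^ 2) ξ ξ with hC
  have hhalf : (0 : EuclideanSpace ℝ (Fin N)) + (1 / 2 : ℝ) • ξ ≠ 0 := by
    simpa using smul_ne_zero (by norm_num : (1 / 2 : ℝ) ≠ 0) hξ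
  have h5 : HasDerivAt (fun s : ℝ => fderiv ℝ (fun x => (H x) ^ 2) ((0 : _) + s • ξ) ξ)
      (iteratedFDeriv ℝ 2 (fun x => (H x) ^ 2) ((0 : _) + (1 / 2 : ℝ) • ξ) ![ξ, ξ])
      (1 / 2) := aux_hasDerivAt hG 0 ξ (1 / 2) hhalf
  have h6 : HasDerivAt (fun s : ℝ => fderiv ℝ (fun x => (H x) ^ 2) ((0 : _) + s • ξ) ξ)
      C (1 / 2) := by
    have hev : (fun s : ℝ => fderiv ℝ (fun x => (H x) ^ 2) ((0 : _) + s • ξ) ξ)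
        =ᶠ[nhds (1 / 2 : ℝ)] fun s => s * C := by
      filter_upwards [Ioi_mem_nhds (by norm_num : (0 : ℝ) < 1 / 2)] with s hs
      simp only [zero_add]
      exact hhomG s hs
    exact (hasDerivAt_mul_const C).congr_of_eventuallyEq hev
  have hCeq : C = iteratedFDeriv ℝ 2 (fun x => (H x) ^ 2)
      ((0 : _) + (1 / 2 : ℝ) • ξ) ![ξ, ξ] := h6.unique h5
  have hbound : Ξ * ‖ξ‖ ^ 2 ≤ C := by
    rw [hCeq]
    exact hhess _ hhalf ξ
  have hval : C = 2 * ⟪H ξ • gradient H ξ, ξ⟫ := aux_fderiv_eq hreg hξ ξ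
  linarith [hbound, hval.symm.le]

/-- Strong monotonicity of the anisotropic flux `ξ ↦ H(ξ)∇H(ξ)` (with value `0` at `ξ = 0`):
if `Hess(H²)(ξ) ζ · ζ ≥ Ξ|ζ|²` for all `ξ ≠ 0`, then
`(H(ξ)∇H(ξ) − H(η)∇H(η)) · (ξ − η) ≥ (Ξ/2)|ξ − η|²` for all `ξ, η`. -/
theorem stmt6 {N : ℕ} (H : EuclideanSpace ℝ (Fin N) → ℝ) (Ξ : ℝ) (hΞ : 0 < Ξ)
    (hreg : ContDiffOn ℝ 2 H {(0 : EuclideanSpace ℝ (Fin N))}ᶜ)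
    (hpos : ∀ ξ : EuclideanSpace ℝ (Fin N), ξ ≠ 0 → 0 < H ξ)
    (hhom : ∀ t : ℝ, 0 ≤ t → ∀ ξ : EuclideanSpace ℝ (Fin N), H (t • ξ) = t * H ξ)
    (hhess : ∀ ξ : EuclideanSpace ℝ (Fin N), ξ ≠ 0 →
      ∀ ζ : EuclideanSpace ℝ (Fin N),
        Ξ * ‖ζ‖ ^ 2 ≤ iteratedFDeriv ℝ 2 (fun x => (H x) ^ 2) ξ ![ζ, ζ]) :
    ∀ ξ η : EuclideanSpace ℝ (Fin N),
      (Ξ / 2) * ‖ξ - η‖ ^ 2 ≤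
        ⟪(if ξ = 0 then 0 else H ξ • gradient H ξ) -
          (if η = 0 then 0 else H η • gradient H η), ξ - η⟫ := by
  intro ξ η
  by_cases hξη : ξ = η
  · subst hξη; simp
  have key : ∀ ζ : EuclideanSpace ℝ (Fin N), ζ ≠ 0 →
      (Ξ / 2) * ‖ζ‖ ^ 2 ≤ ⟪H ζ • gradient H ζ, ζ⟫ := fun ζ hζ =>
    aux_point hreg hhom hhess hζ
  by_cases h0 : (0 : EuclideanSpace ℝ (Fin N)) ∈ segment ℝ η ξ
  · -- the segment passes through the origin
    by_cases hξ0 : ξ = 0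
    · subst hξ0
      have hη0 : η ≠ 0 := fun h => hξη h.symm
      rw [if_pos rfl, if_neg hη0, zero_sub, zero_sub, inner_neg_neg]
      simpa using key η hη0
    by_cases hη0 : η = 0
    · subst hη0
      rw [if_neg hξ0, if_pos rfl, sub_zero, sub_zero]
      exact key ξ hξ0
    -- both nonzero: η = -s • ξ for some s > 0
    obtain ⟨a, b, ha, hb, hab, hsum⟩ := h0
    have ha0 : a ≠ 0 := by
      rintro rfl
      have hb1 : b = 1 := by linarith
      apply hξ0
      have : b • ξ = 0 := by simpa using hsum
      simpa [hb1] using this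
    have hb0 : b ≠ 0 := by
      rintro rfl
      have ha1 : a = 1 := by linarith
      apply hη0
      have : a • η = 0 := by simpa using hsum
      simpa [ha1] using this
    have hapos : 0 < a := lt_of_le_of_ne ha (Ne.symm ha0)
    have hbpos : 0 < b := lt_of_le_of_ne hb (Ne.symm hb0)
    set s : ℝ := b / a with hs
    have hspos : 0 < s := div_pos hbpos hapos
    have hη : η = (-s) • ξ := by
      have h1 : a • η = (-b) • ξ := by
        rw [neg_smul]
        exact eq_neg_of_add_eq_zero_left hsum
      have h2 := congrArg (fun z : EuclideanSpace ℝ (Fin N) => (a⁻¹ : ℝ) • z) h1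
      simp only [smul_smul] at h2
      rw [inv_mul_cancel₀ ha0, one_smul] at h2
      rw [h2, hs]
      congr 1
      field_simp
    have hP := key ξ hξ0
    have hQ := key η hη0
    set P : ℝ := ⟪H ξ • gradient H ξ, ξ⟫ with hPdef
    set Q : ℝ := ⟪H η • gradient H η, ξ⟫ with hQdef
    have hQ' : (Ξ / 2) * (s ^ 2 * ‖ξ‖ ^ 2) ≤ -s * Q := by
      have h1 : ⟪H η • gradient H η, η⟫ = -s * Q := by
        rw [hQdef]
        nth_rewrite 3 [hη]
        exact real_inner_smul_right _ _ _
      have h2 : ‖η‖ ^ 2 = s ^ 2 * ‖ξ‖ ^ 2 := by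
        rw [hη, norm_smul]
        rw [Real.norm_eq_abs, abs_neg, abs_of_pos hspos]
        ring
      rw [h1, h2] at hQ
      linarith
    have hQ'' : (Ξ / 2) * (s * ‖ξ‖ ^ 2) ≤ -Q := by
      refine le_of_mul_le_mul_left ?_ hspos
      linear_combination hQ'
    have hvξ : ξ - η = (1 + s) • ξ := by
      rw [hη, neg_smul, sub_neg_eq_add, add_smul, one_smul, add_comm]
    have hs1 : (0 : ℝ) < 1 + s := by linarith
    rw [if_neg hξ0, if_neg hη0, inner_sub_left, hvξ, real_inner_smul_right,
      real_inner_smul_right, ← hPdef, ← hQdef, norm_smul, Real.norm_eq_abs,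
      abs_of_pos hs1]
    nlinarith [mul_le_mul_of_nonneg_left hP hs1.le,
      mul_le_mul_of_nonneg_left hQ'' hs1.le, sq_nonneg ‖ξ‖]
  · -- segment avoids the origin: mean value theorem
    have hξ0 : ξ ≠ 0 := fun h => h0 (h ▸ right_mem_segment ℝ η ξ)
    have hη0 : η ≠ 0 := fun h => h0 (h ▸ left_mem_segment ℝ η ξ)
    have hG : ContDiffOn ℝ 2 (fun x => (H x) ^ 2)
        {(0 : EuclideanSpace ℝ (Fin N))}ᶜ := hreg.pow 2
    set v : EuclideanSpace ℝ (Fin N) := ξ - η with hv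
    have hseg : ∀ t ∈ Icc (0 : ℝ) 1, η + t • v ≠ 0 := by
      intro t ht hzero
      apply h0
      rw [segment_eq_image']
      exact ⟨t, ht, hzero⟩
    have hfc : ContinuousOn (fun x => fderiv ℝ (fun y => (H y) ^ 2) x)
        {(0 : EuclideanSpace ℝ (Fin N))}ᶜ :=
      hG.continuousOn_fderiv_of_isOpen isOpen_compl_singleton (by norm_num)
    have hγc : Continuous (fun t : ℝ => η + t • v) :=
      continuous_const.add (continuous_id.smul continuous_const)
    have hcont : ContinuousOn
        (fun t : ℝ => fderiv ℝ (fun y => (H y) ^ 2) (η + t • v) v) (Icc 0 1) :=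
      (hfc.comp hγc.continuousOn (fun t ht => hseg t ht)).clm_apply continuousOn_const
    obtain ⟨c, hc, hceq⟩ := exists_hasDerivAt_eq_slope
      (fun t : ℝ => fderiv ℝ (fun y => (H y) ^ 2) (η + t • v) v)
      (fun t : ℝ => iteratedFDeriv ℝ 2 (fun y => (H y) ^ 2) (η + t • v) ![v, v])
      (by norm_num : (0 : ℝ) < 1) hcont
      (fun t ht => aux_hasDerivAt hG η v t (hseg t (Ioo_subset_Icc_self ht)))
    have hlow := hhess (η + c • v) (hseg c (Ioo_subset_Icc_self hc)) v
    rw [hceq] at hlow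
    have h1 : η + (1 : ℝ) • v = ξ := by rw [one_smul, hv]; abel
    have h0' : η + (0 : ℝ) • v = η := by rw [zero_smul, add_zero]
    simp only [h1, h0'] at hlow
    rw [aux_fderiv_eq hreg hξ0 v, aux_fderiv_eq hreg hη0 v, sub_zero, div_one] at hlow
    rw [if_neg hξ0, if_neg hη0, inner_sub_left]
    linarith [hlow]
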